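/- arXiv:2506.06577 — 3 statements merged into one kernel-verified Lean document; each statement's English description precedes it below -/
import Mathlib

section
/- For each qubit i, the weight-2 operator X̄ = Xop {i, τ i} is a logical X operator of the X–I code Ξ(2m): it commutes with every Z-generator and every X-generator of Ξ(2m), and it swaps the codewords, X̄ |0̄⟩ = |1̄⟩ and X̄ |1̄⟩ = |0̄⟩. -/
open scoped BigOperators

/-- Bit strings on `2m` qubits. -/
abbrev Bits (m : ℕ) := Fin (2*m) → ZMod 2

/-- The `2m`-qubit Hilbert space, as functions from computational basis labels to `ℂ`. -/
abbrev QState (m : ℕ) := Bits m → ℂ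

/-- Indicator bit string of a finite set of qubits. -/
def indSet (m : ℕ) (S : Finset (Fin (2*m))) : Bits m := fun i => if i ∈ S then 1 else 0

/-- The Pauli-X operator on the set `S`: sends `|x⟩` to `|x + 1_S⟩`. -/
def Xop (m : ℕ) (S : Finset (Fin (2*m))) : QState m →ₗ[ℂ] QState m where
  toFun v := fun x => v (x + indSet m S)
  map_add' _ _ := rfl
  map_smul' _ _ := rfl

/-- The Pauli-Z operator on the set `S`: sends `|x⟩` to `(-1)^{∑_{i∈S} x i} |x⟩`. -/
def Zop (m : ℕ) (S : Finset (Fin (2*m))) : QState m →ₗ[ℂ] QState m where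
  toFun v := fun x => ((-1 : ℂ) ^ (∑ i ∈ S, (x i).val)) * v x
  map_add' u v := by funext x; simp [mul_add]
  map_smul' c v := by funext x; simp; ring

/-- The antipodal involution `τ i = i + m (mod 2m)`. -/
def tau (m : ℕ) (i : Fin (2*m)) : Fin (2*m) :=
  ⟨(i.val + m) % (2*m), Nat.mod_lt _ (by have := i.isLt; omega)⟩

/-- The computational basis state `|x⟩`. -/
def ket (m : ℕ) (x : Bits m) : QState m := fun y => if y = x then 1 else 0

/-- The pair-equal bit string determined by `b : Fin m → ZMod 2`. -/
def xb (m : ℕ) (b : Fin m → ZMod 2) : Bits m :=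
  fun i => b ⟨i.val % m, Nat.mod_lt _ (by have := i.isLt; omega)⟩

/-- The logical codeword `|0̄⟩` of the X–I code `Ξ(2m)`. -/
noncomputable def ket0 (m : ℕ) : QState m :=
  ((Real.sqrt (2 ^ (m-1)) : ℂ))⁻¹ •
    ∑ b ∈ Finset.univ.filter (fun b : Fin m → ZMod 2 => ∑ i, b i = 0), ket m (xb m b)

/-- The logical codeword `|1̄⟩` of the X–I code `Ξ(2m)`. -/
noncomputable def ket1 (m : ℕ) : QState m :=
  ((Real.sqrt (2 ^ (m-1)) : ℂ))⁻¹ •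
    ∑ b ∈ Finset.univ.filter (fun b : Fin m → ZMod 2 => ∑ i, b i = 1), ket m (xb m b)


section Aux

variable (m : ℕ)

lemma tau_val (i : Fin (2*m)) :
    (tau m i).val = if i.val < m then i.val + m else i.val - m := by
  have hi := i.isLt
  unfold tau
  by_cases h : i.val < m
  · simp only [h, if_true]
    exact Nat.mod_eq_of_lt (by omega)
  · simp only [h, if_false]
    have h1 : i.val + m = (i.val - m) + 2*m := by omega
    rw [h1, Nat.add_mod_right]
    exact Nat.mod_eq_of_lt (by omega)

lemma tau_mod (i : Fin (2*m)) : (tau m i).val % m = i.val % m := by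
  rw [tau_val]
  split
  · exact Nat.add_mod_right _ _
  · have h : i.val - m + m = i.val := by omega
    conv_rhs => rw [← h]
    rw [Nat.add_mod_right]

lemma tau_ne (hm : 0 < m) (i : Fin (2*m)) : tau m i ≠ i := by
  intro h
  have h2 := congrArg Fin.val h
  rw [tau_val] at h2
  have := i.isLt
  split_ifs at h2 <;> omega

lemma mem_pair (hm : 0 < m) (i j : Fin (2*m)) :
    j ∈ ({i, tau m i} : Finset (Fin (2*m))) ↔ j.val % m = i.val % m := by
  simp only [Finset.mem_insert, Finset.mem_singleton]
  constructor
  · rintro (rfl | rfl)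
    · rfl
    · exact tau_mod m i
  · intro h
    have hij := i.isLt
    have hjl := j.isLt
    have e1 := Nat.div_add_mod j.val m
    have e2 := Nat.div_add_mod i.val m
    have l1 : j.val % m < m := Nat.mod_lt _ hm
    have l2 : i.val % m < m := Nat.mod_lt _ hm
    have d1 : j.val / m < 2 := Nat.div_lt_of_lt_mul (by omega)
    have d2 : i.val / m < 2 := Nat.div_lt_of_lt_mul (by omega)
    simp only [Fin.ext_iff, tau_val]
    generalize hq1 : j.val / m = qj at e1 d1
    generalize hq2 : i.val / m = qi at e2 d2
    generalize hr1 : j.val % m = rj at e1 l1 h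
    generalize hr2 : i.val % m = ri at e2 l2 h
    interval_cases qj <;> interval_cases qi <;> split_ifs <;> omega

lemma indSet_pair (hm : 0 < m) (i j : Fin (2*m)) :
    indSet m {i, tau m i} j = if j.val % m = i.val % m then 1 else 0 := by
  simp only [indSet]
  rw [if_congr (mem_pair m hm i j) rfl rfl]

lemma fun_add_self {α : Type*} (x : α → ZMod 2) : x + x = 0 := by
  funext j
  have h : ∀ a : ZMod 2, a + a = 0 := by decide
  exact h (x j)

lemma Xop_ket (S : Finset (Fin (2*m))) (x : Bits m) :
    Xop m S (ket m x) = ket m (x + indSet m S) := by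
  funext y
  simp only [Xop, LinearMap.coe_mk, AddHom.coe_mk, ket]
  have h : y + indSet m S = x ↔ y = x + indSet m S := by
    constructor
    · intro h
      rw [← h, add_assoc, fun_add_self, add_zero]
    · intro h
      rw [h, add_assoc, fun_add_self, add_zero]
  rw [if_congr h rfl rfl]

lemma key_par (a b s : ZMod 2) :
    ((a + s).val + (b + s).val) % 2 = (a.val + b.val) % 2 := by revert a b s; decide

lemma xb_add (hm : 0 < m) (b : Fin m → ZMod 2) (i : Fin (2*m)) :
    xb m b + indSet m {i, tau m i} =
      xb m (b + fun k => if k = (⟨i.val % m, Nat.mod_lt _ hm⟩ : Fin m) then 1 else 0) := by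
  funext j
  simp only [Pi.add_apply, xb, indSet_pair m hm]
  congr 1
  simp [Fin.ext_iff]

lemma sum_shift (hm : 0 < m) (i : Fin (2*m)) (c : ZMod 2) :
    ∑ b ∈ Finset.univ.filter (fun b : Fin m → ZMod 2 => ∑ k, b k = c),
        ket m (xb m b + indSet m {i, tau m i})
      = ∑ b ∈ Finset.univ.filter (fun b : Fin m → ZMod 2 => ∑ k, b k = c + 1),
          ket m (xb m b) := by
  set i0 : Fin m := ⟨i.val % m, Nat.mod_lt _ hm⟩ with hi0
  set g : Fin m → ZMod 2 := (fun k => if k = i0 then 1 else 0) with hg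
  have hsg : ∑ k, g k = 1 := by simp [hg]
  have hgg : ∀ b : Fin m → ZMod 2, b + g + g = b := by
    intro b
    rw [add_assoc, fun_add_self, add_zero]
  refine Finset.sum_nbij' (fun b => b + g) (fun b => b + g) ?_ ?_ ?_ ?_ ?_
  · intro b hb
    simp only [Finset.mem_filter, Finset.mem_univ, true_and] at hb ⊢
    simp [Finset.sum_add_distrib, hb, hsg]
  · intro b hb
    simp only [Finset.mem_filter, Finset.mem_univ, true_and] at hb ⊢
    have h2 : ∀ a : ZMod 2, a + 1 + 1 = a := by decide
    simp [Finset.sum_add_distrib, hb, hsg, h2]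
  · intro b _
    exact hgg b
  · intro b _
    exact hgg b
  · intro b _
    rw [xb_add m hm b i]

lemma Xop_ket0 (hm : 0 < m) (i : Fin (2*m)) :
    Xop m {i, tau m i} (ket0 m) = ket1 m := by
  rw [ket0, map_smul, map_sum, ket1]
  congr 1
  have h01 : (0 : ZMod 2) + 1 = 1 := by decide
  calc ∑ b ∈ Finset.univ.filter (fun b : Fin m → ZMod 2 => ∑ k, b k = 0),
          Xop m {i, tau m i} (ket m (xb m b))
      = ∑ b ∈ Finset.univ.filter (fun b : Fin m → ZMod 2 => ∑ k, b k = 0),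
          ket m (xb m b + indSet m {i, tau m i}) := by
        refine Finset.sum_congr rfl fun b _ => ?_
        exact Xop_ket m _ _
    _ = _ := by rw [sum_shift m hm i 0, h01]

lemma Xop_ket1 (hm : 0 < m) (i : Fin (2*m)) :
    Xop m {i, tau m i} (ket1 m) = ket0 m := by
  rw [ket1, map_smul, map_sum, ket0]
  congr 1
  have h11 : (1 : ZMod 2) + 1 = 0 := by decide
  calc ∑ b ∈ Finset.univ.filter (fun b : Fin m → ZMod 2 => ∑ k, b k = 1),
          Xop m {i, tau m i} (ket m (xb m b))
      = ∑ b ∈ Finset.univ.filter (fun b : Fin m → ZMod 2 => ∑ k, b k = 1),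
          ket m (xb m b + indSet m {i, tau m i}) := by
        refine Finset.sum_congr rfl fun b _ => ?_
        exact Xop_ket m _ _
    _ = _ := by rw [sum_shift m hm i 1, h11]

end Aux

/-- For each qubit `i`, the weight-2 operator `X̄ = Xop {i, τ i}` is a logical X
operator of the X–I code `Ξ(2m)`: it commutes with every Z-generator and every
X-generator, and it swaps the codewords `|0̄⟩` and `|1̄⟩`. -/
theorem XI_logical_X (m : ℕ) (hm : 2 ≤ m) (i : Fin (2*m)) :
    (∀ j : Fin (2*m),
        (Xop m {i, tau m i}).comp (Zop m {j, tau m j}) =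
          (Zop m {j, tau m j}).comp (Xop m {i, tau m i})) ∧
    (∀ j k : Fin (2*m), ({j, tau m j} : Finset (Fin (2*m))) ≠ {k, tau m k} →
        (Xop m {i, tau m i}).comp (Xop m {j, tau m j, k, tau m k}) =
          (Xop m {j, tau m j, k, tau m k}).comp (Xop m {i, tau m i})) ∧
    Xop m {i, tau m i} (ket0 m) = ket1 m ∧
    Xop m {i, tau m i} (ket1 m) = ket0 m := by
  have hm0 : 0 < m := by omega
  refine ⟨?_, ?_, Xop_ket0 m hm0 i, Xop_ket1 m hm0 i⟩
  · intro j
    apply LinearMap.ext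
    intro v
    funext x
    simp only [LinearMap.comp_apply, Xop, Zop, LinearMap.coe_mk, AddHom.coe_mk]
    congr 1
    rw [Finset.sum_pair (Ne.symm (tau_ne m hm0 j)),
        Finset.sum_pair (Ne.symm (tau_ne m hm0 j))]
    have hs : indSet m {i, tau m i} j = indSet m {i, tau m i} (tau m j) := by
      rw [indSet_pair m hm0, indSet_pair m hm0, tau_mod]
    simp only [Pi.add_apply]
    rw [hs]
    rw [neg_one_pow_eq_pow_mod_two, neg_one_pow_eq_pow_mod_two
      (n := (x j).val + (x (tau m j)).val)]
    congr 1
    exact key_par _ _ _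
  · intro j k _
    apply LinearMap.ext
    intro v
    funext x
    simp only [LinearMap.comp_apply, Xop, LinearMap.coe_mk, AddHom.coe_mk]
    congr 1
    rw [add_right_comm]
end

section
/- In the ZMod 2 vector space of functions Fin (2m) → ZMod 2, the span of the Z-generator support vectors {e_i + e_{τ i} : i ∈ Fin (2m)} has dimension m, and the span of the X-generator support vectors {e_i + e_{τ i} + e_j + e_{τ j} : {i, τ i} ≠ {j, τ j}} has dimension m − 1; hence the X–I code Ξ(2m) has m independent Z-generators and m − 1 independent X-generators. -/
open scoped BigOperators

/-- Support vectors of the Z-generators of `Ξ(2m)`: the indicators of the antipodal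
pairs `{i, τ i}`, i.e. `e_i + e_{τ i}`. -/
def ZgenSupports (m : ℕ) : Set (Fin (2*m) → ZMod 2) :=
  {v | ∃ i : Fin (2*m), v = Pi.single i 1 + Pi.single (tau m i) 1}

/-- Support vectors of the X-generators of `Ξ(2m)`: the indicators of unions of two
distinct antipodal pairs, i.e. `e_i + e_{τ i} + e_j + e_{τ j}`. -/
def XgenSupports (m : ℕ) : Set (Fin (2*m) → ZMod 2) :=
  {v | ∃ i j : Fin (2*m), ({i, tau m i} : Finset (Fin (2*m))) ≠ {j, tau m j} ∧
        v = Pi.single i 1 + Pi.single (tau m i) 1 + Pi.single j 1 + Pi.single (tau m j) 1}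

namespace XIaux

variable (m : ℕ)

/-- The Z-generator support vector of the pair of `i`. -/
def gg (i : Fin (2*m)) : Fin (2*m) → ZMod 2 :=
  Pi.single i 1 + Pi.single (tau m i) 1

lemma tau_val (i : Fin (2*m)) :
    (tau m i).val = if i.val < m then i.val + m else i.val - m := by
  have hi := i.isLt
  show (i.val + m) % (2*m) = _
  split
  · rw [Nat.mod_eq_of_lt (by omega)]
  · rw [Nat.mod_eq_sub_mod (by omega), Nat.mod_eq_of_lt (by omega)]
    omega

lemma tau_val_mk (k : ℕ) (h : k < 2*m) :
    (tau m ⟨k, h⟩).val = if k < m then k + m else k - m := tau_val m ⟨k, h⟩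

lemma tau_tau (i : Fin (2*m)) : tau m (tau m i) = i := by
  have hi := i.isLt
  have h1 := tau_val m i
  have h2 := tau_val m (tau m i)
  apply Fin.ext
  rw [h2, h1]
  split <;> split <;> omega

lemma gg_tau (i : Fin (2*m)) : gg m (tau m i) = gg m i := by
  unfold gg
  rw [tau_tau, add_comm]


lemma gg_apply (i j : Fin (2*m)) :
    gg m i j = (if j.val = i.val then 1 else 0)
      + (if j.val = (if i.val < m then i.val + m else i.val - m) then 1 else 0) := by
  unfold gg
  simp only [Pi.add_apply, Pi.single_apply, Fin.ext_iff, tau_val]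

/-- The family of `m` independent Z-generator supports. -/
def ff (k : Fin m) : Fin (2*m) → ZMod 2 := gg m ⟨k.val, by omega⟩

lemma ff_eval (k l : Fin m) :
    ff m k ⟨l.val, by omega⟩ = if k = l then 1 else 0 := by
  have hk := k.isLt; have hl := l.isLt
  unfold ff
  rw [gg_apply]
  simp only [Fin.val_mk]
  rw [if_pos hk, if_neg (by omega : ¬ l.val = k.val + m), add_zero]
  by_cases hkl : k = l
  · subst hkl; simp
  · rw [if_neg (fun h => hkl (Fin.ext h.symm)), if_neg hkl]

lemma ff_li : LinearIndependent (ZMod 2) (ff m) := by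
  rw [Fintype.linearIndependent_iff]
  intro c hc l
  have h := congrFun hc ⟨l.val, by omega⟩
  simp only [Finset.sum_apply, Pi.smul_apply, smul_eq_mul, Pi.zero_apply,
    ff_eval, mul_ite, mul_one, mul_zero, Finset.sum_ite_eq', Finset.mem_univ,
    if_true] at h
  exact h

lemma range_gg_eq : Set.range (gg m) = Set.range (ff m) := by
  ext v
  constructor
  · rintro ⟨i, rfl⟩
    by_cases h : i.val < m
    · exact ⟨⟨i.val, h⟩, by unfold ff; congr 1⟩
    · have hlt : (tau m i).val < m := by rw [tau_val]; have := i.isLt; simp [h]; omega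
      refine ⟨⟨(tau m i).val, hlt⟩, ?_⟩
      unfold ff
      rw [show (⟨(tau m i).val, by omega⟩ : Fin (2*m)) = tau m i from rfl, gg_tau]
  · rintro ⟨k, rfl⟩
    exact ⟨_, rfl⟩

lemma Zgen_eq : ZgenSupports m = Set.range (ff m) := by
  rw [← range_gg_eq]
  ext v
  exact ⟨fun ⟨i, h⟩ => ⟨i, h.symm⟩, fun ⟨i, h⟩ => ⟨i, h.symm⟩⟩

/-- The zero qubit index. -/
def zof (h : 0 < m) : Fin (2*m) := ⟨0, by omega⟩

/-- The family of `m-1` independent X-generator supports. -/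
def hh (k : Fin (m-1)) : Fin (2*m) → ZMod 2 :=
  gg m (zof m (by have := k.isLt; omega)) + gg m ⟨k.val + 1, by have := k.isLt; omega⟩

lemma hh_eval (k l : Fin (m-1)) :
    hh m k ⟨l.val + 1, by have := l.isLt; omega⟩ = if k = l then 1 else 0 := by
  have hk := k.isLt; have hl := l.isLt
  have hrhs : (if k = l then (1 : ZMod 2) else 0)
      = if l.val + 1 = k.val + 1 then 1 else 0 := by
    by_cases hkl : k = l
    · subst hkl; simp
    · rw [if_neg hkl, if_neg (fun h => hkl (Fin.ext (by omega)))]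
  rw [hrhs]
  unfold hh zof
  simp only [Pi.add_apply, gg_apply, Fin.val_mk]
  rw [if_pos (show (0:ℕ) < m by omega), if_pos (show k.val + 1 < m by omega)]
  rw [if_neg (by omega : ¬ l.val + 1 = 0), if_neg (by omega : ¬ l.val + 1 = 0 + m),
    if_neg (by omega : ¬ l.val + 1 = k.val + 1 + m)]
  ring

lemma hh_li : LinearIndependent (ZMod 2) (hh m) := by
  rw [Fintype.linearIndependent_iff]
  intro c hc l
  have h := congrFun hc ⟨l.val + 1, by have := l.isLt; omega⟩
  simp only [Finset.sum_apply, Pi.smul_apply, smul_eq_mul, Pi.zero_apply,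
    hh_eval, mul_ite, mul_one, mul_zero, Finset.sum_ite_eq', Finset.mem_univ,
    if_true] at h
  exact h

lemma gg_add_self (i : Fin (2*m)) : gg m i + gg m i = 0 := by
  funext t
  simp only [Pi.add_apply, Pi.zero_apply]
  exact CharTwo.add_self_eq_zero _

lemma hh_mem (hm : 2 ≤ m) (k : Fin (m-1)) : hh m k ∈ XgenSupports m := by
  have hk := k.isLt
  refine ⟨zof m (by omega), ⟨k.val + 1, by omega⟩, ?_, ?_⟩
  · intro h
    have h0 : (zof m (by omega)) ∈
        ({(⟨k.val+1, by omega⟩ : Fin (2*m)),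
          tau m ⟨k.val+1, by omega⟩} : Finset (Fin (2*m))) := by
      rw [← h]; simp
    have htk : (tau m (⟨k.val + 1, by omega⟩ : Fin (2*m))).val = k.val + 1 + m := by
      rw [tau_val_mk, if_pos (by omega)]
    rcases Finset.mem_insert.mp h0 with h1 | h1
    · have h2 := congrArg Fin.val h1
      simp only [zof] at h2
      omega
    · have h1 := Finset.mem_singleton.mp h1
      have h2 := congrArg Fin.val h1
      simp only [zof] at h2
      omega
  · unfold hh gg
    abel

/-- Every `gg i0 + gg i` lies in the span of `hh`. -/
lemma gg_pair_mem (hm : 2 ≤ m) (i : Fin (2*m)) :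
    gg m (zof m (by omega)) + gg m i ∈ Submodule.span (ZMod 2) (Set.range (hh m)) := by
  have key : ∀ i : Fin (2*m), i.val < m →
      gg m (zof m (by omega)) + gg m i ∈ Submodule.span (ZMod 2) (Set.range (hh m)) := by
    intro i hi
    rcases Nat.eq_zero_or_pos i.val with h0 | h0
    · have hiz : i = zof m (by omega) := Fin.ext h0
      rw [hiz, gg_add_self]
      exact Submodule.zero_mem _
    · refine Submodule.subset_span ⟨⟨i.val - 1, by omega⟩, ?_⟩
      unfold hh
      congr 2
      exact Fin.ext (show i.val - 1 + 1 = i.val from by omega)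
  by_cases h : i.val < m
  · exact key i h
  · rw [show gg m i = gg m (tau m i) from (gg_tau m i).symm]
    exact key (tau m i) (by rw [tau_val, if_neg h]; have := i.isLt; omega)

lemma Xgen_span_eq (hm : 2 ≤ m) :
    Submodule.span (ZMod 2) (XgenSupports m)
      = Submodule.span (ZMod 2) (Set.range (hh m)) := by
  apply le_antisymm
  · rw [Submodule.span_le]
    rintro v ⟨i, j, _, rfl⟩
    have hv : Pi.single i (1 : ZMod 2) + Pi.single (tau m i) 1 + Pi.single j 1
        + Pi.single (tau m j) 1 = (gg m (zof m (by omega)) + gg m i)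
        + (gg m (zof m (by omega)) + gg m j) := by
      rw [show (gg m (zof m (by omega)) + gg m i) + (gg m (zof m (by omega)) + gg m j)
          = (gg m (zof m (by omega)) + gg m (zof m (by omega))) + (gg m i + gg m j)
          from by abel, gg_add_self, zero_add]
      unfold gg
      abel
    rw [hv]
    exact Submodule.add_mem _ (gg_pair_mem m hm i) (gg_pair_mem m hm j)
  · rw [Submodule.span_le]
    rintro v ⟨k, rfl⟩
    exact Submodule.subset_span (hh_mem m hm k)

end XIaux

/-- In the `ZMod 2` vector space `Fin (2m) → ZMod 2`, the span of the Z-generator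
support vectors has dimension `m` and the span of the X-generator support vectors
has dimension `m − 1`: the X–I code `Ξ(2m)` has `m` independent Z-generators and
`m − 1` independent X-generators. -/
theorem XI_generator_ranks (m : ℕ) (hm : 2 ≤ m) :
    Module.finrank (ZMod 2) (Submodule.span (ZMod 2) (ZgenSupports m)) = m ∧
    Module.finrank (ZMod 2) (Submodule.span (ZMod 2) (XgenSupports m)) = m - 1 := by
  constructor
  · rw [XIaux.Zgen_eq, finrank_span_eq_card (XIaux.ff_li m)]
    simp
  · rw [XIaux.Xgen_span_eq m hm, finrank_span_eq_card (XIaux.hh_li m)]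
    simp
end

section
/- The stabilizer group of the X–I code Ξ(2m) — the subgroup of invertible linear maps on the 2m-qubit Hilbert space generated by all Z-generators Zop {i, τ i} and all X-generators Xop {i, τ i, j, τ j} — is an elementary abelian 2-group of order 2^{2m−1}. -/
open scoped BigOperators

/-- All stabilizer generators (Z- and X-) of the X–I code `Ξ(2m)`, as units of the
endomorphism ring of the `2m`-qubit Hilbert space. -/
def XIgenUnits (m : ℕ) : Set (Module.End ℂ (QState m))ˣ :=
  {u | (∃ i : Fin (2*m), (u : Module.End ℂ (QState m)) = Zop m {i, tau m i}) ∨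
       (∃ i j : Fin (2*m), ({i, tau m i} : Finset (Fin (2*m))) ≠ {j, tau m j} ∧
          (u : Module.End ℂ (QState m)) = Xop m {i, tau m i, j, tau m j})}

/-- The stabilizer group of the X–I code `Ξ(2m)`: the subgroup of invertible linear
maps generated by all Z-generators and X-generators. -/
noncomputable def XIstabilizer (m : ℕ) : Subgroup (Module.End ℂ (QState m))ˣ :=
  Subgroup.closure (XIgenUnits m)

namespace XIaux

/-- sign character. -/
def sgn (a : ZMod 2) : ℂ := (-1) ^ a.val

lemma sgn_zero : sgn 0 = 1 := rfl

lemma sgn_add (a b : ZMod 2) : sgn (a + b) = sgn a * sgn b := by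
  have h1 : ((1:ZMod 2)+1) = 0 := by decide
  have h2 : ((1:ZMod 2)).val = 1 := rfl
  have hc : ∀ c : ZMod 2, c = 0 ∨ c = 1 := by decide
  rcases hc a with rfl | rfl <;> rcases hc b with rfl | rfl <;> simp [sgn, h1, h2] <;> norm_num

lemma sgn_ne_zero (a : ZMod 2) : sgn a ≠ 0 := by
  fin_cases a <;> simp [sgn]

lemma sgn_eq_one (a : ZMod 2) (h : sgn a = 1) : a = 0 := by
  have h2 : ((1:ZMod 2)).val = 1 := rfl
  have hc : ∀ c : ZMod 2, c = 0 ∨ c = 1 := by decide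
  rcases hc a with rfl | rfl <;> simp_all [sgn, h2] <;> norm_num at h

variable {m : ℕ}

def dot (b x : Bits m) : ZMod 2 := ∑ i, b i * x i

lemma dot_add_right (b x y : Bits m) : dot b (x + y) = dot b x + dot b y := by
  simp [dot, mul_add, Finset.sum_add_distrib]

lemma dot_add_left (b c x : Bits m) : dot (b + c) x = dot b x + dot c x := by
  simp [dot, add_mul, Finset.sum_add_distrib]

/-- The generalized Pauli operator `X_a Z_b`. -/
def op (a b : Bits m) : Module.End ℂ (QState m) where
  toFun v := fun x => sgn (dot b x) * v (x + a)
  map_add' u v := by funext x; simp [mul_add]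
  map_smul' c v := by funext x; simp; ring

lemma op_apply (a b : Bits m) (v : QState m) (x : Bits m) :
    op a b v x = sgn (dot b x) * v (x + a) := rfl

lemma add_self (x : Bits m) : x + x = 0 := by
  funext i
  have : ∀ c : ZMod 2, c + c = 0 := by decide
  exact this _

lemma op_mul (a b a' b' : Bits m) (h : dot b' a = 0) :
    op a b * op a' b' = op (a + a') (b + b') := by
  apply LinearMap.ext; intro v; funext x
  simp only [Module.End.mul_apply, op_apply, dot_add_right, dot_add_left, sgn_add, h, sgn_zero,
    add_assoc]
  ring

lemma op_zero_zero : (op 0 0 : Module.End ℂ (QState m)) = 1 := by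
  apply LinearMap.ext; intro v; funext x
  simp [op_apply, dot, sgn_zero]

lemma sgn_sum (S : Finset (Fin (2*m))) (x : Bits m) :
    ((-1 : ℂ) ^ (∑ i ∈ S, (x i).val)) = sgn (∑ i ∈ S, x i) := by
  induction S using Finset.induction_on with
  | empty => simp [sgn_zero]
  | insert _ _ hnot ih =>
    rw [Finset.sum_insert hnot, Finset.sum_insert hnot, pow_add, sgn_add, ih]; rfl

lemma Zop_eq (S : Finset (Fin (2*m))) : (Zop m S : Module.End ℂ (QState m)) = op 0 (indSet m S) := by
  apply LinearMap.ext; intro v; funext x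
  have : dot (indSet m S) x = ∑ i ∈ S, x i := by
    simp [dot, indSet, ite_mul, Finset.sum_ite_mem]
  rw [op_apply, this, add_zero, ← sgn_sum]
  rfl

lemma Xop_eq (S : Finset (Fin (2*m))) : (Xop m S : Module.End ℂ (QState m)) = op (indSet m S) 0 := by
  apply LinearMap.ext; intro v; funext x
  simp [op_apply, dot, sgn_zero, Xop]

lemma op_eq_one (a b : Bits m) (h : (op a b : Module.End ℂ (QState m)) = 1) : a = 0 ∧ b = 0 := by
  have ha : a = 0 := by
    by_contra hne
    have := congrFun (LinearMap.congr_fun h (ket m 0)) a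
    simp [op_apply, add_self, ket] at this
    exact sgn_ne_zero _ (by simpa [hne] using this)
  subst ha
  have hb : ∀ y : Bits m, dot b y = 0 := by
    intro y
    have := congrFun (LinearMap.congr_fun h (ket m y)) y
    simp [op_apply, ket] at this
    exact sgn_eq_one _ this
  constructor
  · rfl
  · funext i
    have := hb (fun j => if j = i then 1 else 0)
    simpa [dot, Finset.sum_ite_eq'] using this


lemma mod_red (hm : 1 ≤ m) {n : ℕ} (h : n < 2*m) : n % m = if n < m then n else n - m := by
  split
  · exact Nat.mod_eq_of_lt ‹_›
  · rw [Nat.mod_eq_sub_mod (by omega)]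
    exact Nat.mod_eq_of_lt (by omega)

/-- Sum over `Fin (2m)` of a function of `i % m` vanishes mod 2. -/
lemma two_sum (F : ℕ → ZMod 2) : ∑ i : Fin (2*m), F (i.val % m) = 0 := by
  rw [Fin.sum_univ_eq_sum_range (fun n => F (n % m)), two_mul, Finset.sum_range_add]
  have h1 : ∀ i ∈ Finset.range m, F ((m + i) % m) = F (i % m) := by
    intro i _
    rw [Nat.add_mod_left]
  rw [Finset.sum_congr rfl h1, ← two_mul]
  have : ∀ c : ZMod 2, c + c = 0 := by decide
  rw [two_mul]; exact this _

lemma dot_xb (t u : Fin m → ZMod 2) : dot (xb m t) (xb m u) = 0 := by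
  have : ∀ i : Fin (2*m), xb m t i * xb m u i =
      (fun n => if h : n < m then t ⟨n, h⟩ * u ⟨n, h⟩ else 0) (i.val % m) := by
    intro i
    have hlt : i.val % m < m := Nat.mod_lt _ (by have := i.isLt; omega)
    simp [xb, dif_pos hlt]
  rw [dot, Finset.sum_congr rfl (fun i _ => this i)]
  exact two_sum (m := m) (fun n => if h : n < m then t ⟨n, h⟩ * u ⟨n, h⟩ else 0)

lemma xb_add (t u : Fin m → ZMod 2) : xb m (t + u) = xb m t + xb m u := rfl

lemma xb_eq_zero (hm : 1 ≤ m) {t : Fin m → ZMod 2} (h : xb m t = 0) : t = 0 := by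
  funext j
  have hj : (j : ℕ) < 2*m := by have := j.isLt; omega
  have := congrFun h ⟨j, hj⟩
  simpa [xb, Nat.mod_eq_of_lt j.isLt, Fin.eta] using this

/-- Extension of `s : Fin (m-1) → ZMod 2` to a sum-zero function on `Fin m`. -/
def extF (s : Fin (m-1) → ZMod 2) : Fin m → ZMod 2 :=
  fun j => if h : (j : ℕ) < m - 1 then s ⟨j, h⟩ else ∑ k, s k

lemma extF_add (s s' : Fin (m-1) → ZMod 2) : extF (s + s') = extF s + extF s' := by
  funext j
  by_cases h : (j : ℕ) < m - 1 <;> simp [extF, h, Finset.sum_add_distrib]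

lemma extF_zero : extF (m := m) 0 = 0 := by
  funext j; by_cases h : (j : ℕ) < m - 1 <;> simp [extF, h]

lemma extF_inj {s : Fin (m-1) → ZMod 2} (h : extF s = 0) : s = 0 := by
  funext j
  have hj : (j : ℕ) < m := by have := j.isLt; omega
  have := congrFun h ⟨j, hj⟩
  simpa [extF, j.isLt] using this

lemma z2_add_self (c : ZMod 2) : c + c = 0 := by
  have : ∀ c : ZMod 2, c + c = 0 := by decide
  exact this c

lemma z2_cancel {a b : ZMod 2} (h : a + b = 0) : a = b := by
  have : ∀ a b : ZMod 2, a + b = 0 → a = b := by decide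
  exact this a b h

lemma sum_split (hm : 1 ≤ m) (t : Fin m → ZMod 2) :
    ∑ j, t j = (∑ k : Fin (m-1), t ⟨k, by have := k.isLt; omega⟩) + t ⟨m-1, by omega⟩ := by
  set g : ℕ → ZMod 2 := fun n => if h : n < m then t ⟨n, h⟩ else 0 with hg
  have h1 : ∑ j, t j = ∑ n ∈ Finset.range m, g n := by
    rw [← Fin.sum_univ_eq_sum_range g m]
    exact Finset.sum_congr rfl (fun j _ => by simp [hg, j.isLt])
  have h2 : (∑ k : Fin (m-1), t ⟨k, by have := k.isLt; omega⟩) =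
      ∑ n ∈ Finset.range (m-1), g n := by
    rw [← Fin.sum_univ_eq_sum_range g (m-1)]
    refine Finset.sum_congr rfl (fun k _ => ?_)
    have hk : (k : ℕ) < m := by have := k.isLt; omega
    simp [hg, hk]
  have h3 := Finset.sum_range_succ g (m-1)
  rw [show (m-1)+1 = m from by omega] at h3
  rw [h1, h3, h2]
  congr 1
  simp [hg, show m-1 < m from by omega]

lemma sum_extF (hm : 1 ≤ m) (s : Fin (m-1) → ZMod 2) : ∑ j, extF s j = 0 := by
  rw [sum_split hm]
  have h1 : ∀ k : Fin (m-1), extF s ⟨k, by have := k.isLt; omega⟩ = s k := by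
    intro k; simp [extF, k.isLt]
  have h2 : extF s ⟨m-1, by omega⟩ = ∑ k, s k := by simp [extF]
  rw [Finset.sum_congr rfl (fun k _ => h1 k), h2]
  exact z2_add_self _

lemma extF_surj (hm : 1 ≤ m) (t : Fin m → ZMod 2) (ht : ∑ j, t j = 0) :
    ∃ s, extF s = t := by
  refine ⟨fun k => t ⟨k, by have := k.isLt; omega⟩, ?_⟩
  funext j
  by_cases h : (j : ℕ) < m - 1
  · simp [extF, h]
  · have hj : (j : ℕ) = m - 1 := by have := j.isLt; omega
    rw [sum_split hm] at ht
    have he : extF (fun k => t ⟨k, by have := k.isLt; omega⟩) j =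
        ∑ k : Fin (m-1), t ⟨k, by have := k.isLt; omega⟩ := by
      simp [extF, h]
    rw [he, z2_cancel ht]
    congr 1
    exact Fin.ext hj.symm


def pairInd (i : Fin (2*m)) : Fin m → ZMod 2 := fun j => if (j : ℕ) = i.val % m then 1 else 0

lemma mem_pair_iff (hm : 1 ≤ m) (i k : Fin (2*m)) :
    k ∈ ({i, tau m i} : Finset (Fin (2*m))) ↔ k.val % m = i.val % m := by
  have hi := i.isLt; have hk := k.isLt
  have h1 := mod_red hm hk
  have h3 := mod_red hm hi
  have h2 : (i.val + m) % (2*m) = if i.val < m then i.val + m else i.val - m := by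
    split
    · exact Nat.mod_eq_of_lt (by omega)
    · rw [Nat.mod_eq_sub_mod (by omega), show i.val + m - 2*m = i.val - m from by omega]
      exact Nat.mod_eq_of_lt (by omega)
  simp only [Finset.mem_insert, Finset.mem_singleton, Fin.ext_iff]
  show (k.val = i.val ∨ k.val = (i.val + m) % (2*m)) ↔ _
  rw [h1, h2, h3]
  split_ifs <;> omega

lemma indSet_pair (hm : 1 ≤ m) (i : Fin (2*m)) :
    indSet m {i, tau m i} = xb m (pairInd i) := by
  funext k
  show (if k ∈ ({i, tau m i} : Finset (Fin (2*m))) then (1 : ZMod 2) else 0) = _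
  show _ = if ((⟨k.val % m, _⟩ : Fin m) : ℕ) = i.val % m then (1 : ZMod 2) else 0
  by_cases h : k ∈ ({i, tau m i} : Finset (Fin (2*m)))
  · rw [if_pos h, if_pos ((mem_pair_iff hm i k).1 h)]
  · rw [if_neg h, if_neg (fun hc => h ((mem_pair_iff hm i k).2 hc))]

lemma sum_pairInd (hm : 1 ≤ m) (i : Fin (2*m)) : ∑ j, pairInd i j = 1 := by
  have hlt : i.val % m < m := Nat.mod_lt _ (by omega)
  have : ∀ j : Fin m, pairInd i j = if j = ⟨i.val % m, hlt⟩ then 1 else 0 := by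
    intro j; simp [pairInd, Fin.ext_iff]
  rw [Finset.sum_congr rfl (fun j _ => this j)]
  simp

lemma pair_eq_of_mod (hm : 1 ≤ m) {i j : Fin (2*m)} (h : i.val % m = j.val % m) :
    ({i, tau m i} : Finset (Fin (2*m))) = {j, tau m j} := by
  ext k; rw [mem_pair_iff hm, mem_pair_iff hm, h]

lemma indSet_quad (hm : 1 ≤ m) (i j : Fin (2*m)) (hij : i.val % m ≠ j.val % m) :
    indSet m {i, tau m i, j, tau m j} = xb m (pairInd i + pairInd j) := by
  have hmem : ∀ k, k ∈ ({i, tau m i, j, tau m j} : Finset (Fin (2*m))) ↔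
      (k ∈ ({i, tau m i} : Finset (Fin (2*m))) ∨ k ∈ ({j, tau m j} : Finset (Fin (2*m)))) := by
    intro k
    simp only [Finset.mem_insert, Finset.mem_singleton]
    tauto
  funext k
  have hki := mem_pair_iff hm i k
  have hkj := mem_pair_iff hm j k
  show (if k ∈ ({i, tau m i, j, tau m j} : Finset (Fin (2*m))) then (1 : ZMod 2) else 0) = _
  show _ = pairInd i ⟨k.val % m, _⟩ + pairInd j ⟨k.val % m, _⟩
  simp only [hmem k]
  simp only [pairInd]
  by_cases h1 : k.val % m = i.val % m <;> by_cases h2 : k.val % m = j.val % m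
  · exact absurd (h1 ▸ h2) hij
  · simp only [hki, hkj, h1, h2]
    simp [h1, h2, hij]
  · simp only [hki, hkj, h1, h2]
    simp [h1, h2]
    exact fun hc => hij hc.symm
  · simp [hki, hkj, h1, h2]

/-- The parameter group. -/
abbrev Dgrp (m : ℕ) := (Fin (m-1) → ZMod 2) × (Fin m → ZMod 2)

abbrev Abits (s : Fin (m-1) → ZMod 2) : Bits m := xb m (extF s)
abbrev Bbits (t : Fin m → ZMod 2) : Bits m := xb m t

lemma op_invol (s : Fin (m-1) → ZMod 2) (t : Fin m → ZMod 2) :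
    op (Abits s) (Bbits t) * op (Abits s) (Bbits t) = 1 := by
  rw [op_mul _ _ _ _ (dot_xb t (extF s)), add_self, add_self, op_zero_zero]

lemma Abits_zero : Abits (m := m) 0 = 0 := by
  show xb m (extF 0) = 0
  rw [extF_zero]
  rfl

/-- The parametrization homomorphism. -/
noncomputable def Psi (m : ℕ) : Multiplicative (Dgrp m) →* (Module.End ℂ (QState m))ˣ where
  toFun p := ⟨op (Abits p.toAdd.1) (Bbits p.toAdd.2), op (Abits p.toAdd.1) (Bbits p.toAdd.2),
    op_invol _ _, op_invol _ _⟩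
  map_one' := by
    apply Units.ext
    show op (Abits 0) (Bbits 0) = 1
    rw [Abits_zero]
    show op 0 (xb m 0) = 1
    exact op_zero_zero
  map_mul' p q := by
    apply Units.ext
    show op (xb m (extF ((p.toAdd + q.toAdd).1))) (xb m ((p.toAdd + q.toAdd).2)) =
      op (xb m (extF p.toAdd.1)) (xb m p.toAdd.2) * op (xb m (extF q.toAdd.1)) (xb m q.toAdd.2)
    rw [op_mul _ _ _ _ (dot_xb _ _), ← xb_add, ← xb_add, ← extF_add]
    rfl

lemma Psi_coe (p : Multiplicative (Dgrp m)) :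
    ((Psi m p : (Module.End ℂ (QState m))ˣ) : Module.End ℂ (QState m)) =
      op (Abits p.toAdd.1) (Bbits p.toAdd.2) := rfl

lemma Psi_inj (hm : 1 ≤ m) : Function.Injective (Psi m) := by
  rw [injective_iff_map_eq_one]
  intro p hp
  have h : op (Abits p.toAdd.1) (Bbits p.toAdd.2) = 1 := by
    rw [← Psi_coe, hp]; rfl
  obtain ⟨ha, hb⟩ := op_eq_one _ _ h
  have h1 : p.toAdd.1 = 0 := extF_inj (xb_eq_zero hm ha)
  have h2 : p.toAdd.2 = 0 := xb_eq_zero hm hb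
  have : p.toAdd = 0 := Prod.ext h1 h2
  have : p = Multiplicative.ofAdd 0 := by
    rw [← this]; rfl
  rw [this]; rfl

lemma Psi_Z (hm : 1 ≤ m) (i : Fin (2*m)) :
    ((Psi m (Multiplicative.ofAdd (0, pairInd i)) : (Module.End ℂ (QState m))ˣ) :
      Module.End ℂ (QState m)) = Zop m {i, tau m i} := by
  rw [Psi_coe, Zop_eq, indSet_pair hm]
  show op (Abits 0) _ = _
  rw [Abits_zero]
  rfl

lemma Psi_X (hm : 1 ≤ m) {s : Fin (m-1) → ZMod 2} {i j : Fin (2*m)}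
    (hij : i.val % m ≠ j.val % m) (hs : extF s = pairInd i + pairInd j) :
    ((Psi m (Multiplicative.ofAdd (s, 0)) : (Module.End ℂ (QState m))ˣ) :
      Module.End ℂ (QState m)) = Xop m {i, tau m i, j, tau m j} := by
  rw [Psi_coe, Xop_eq, indSet_quad hm i j hij]
  show op (xb m (extF s)) (xb m 0) = _
  rw [hs]
  rfl

lemma gen_rec {k : ℕ} (P : (Fin k → ZMod 2) → Prop) (h0 : P 0)
    (hstep : ∀ s j, P s → P (s + fun i => if i = j then 1 else 0)) (s : Fin k → ZMod 2) :
    P s := by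
  classical
  have key : ∀ S : Finset (Fin k), ∀ s : Fin k → ZMod 2, (∀ j, j ∉ S → s j = 0) → P s := by
    intro S
    induction S using Finset.induction_on with
    | empty =>
      intro s hs
      have : s = 0 := funext fun j => hs j (by simp)
      rwa [this]
    | @insert a S ha ih =>
      intro s hs
      have hz : s a = 0 ∨ s a = 1 := by
        have : ∀ c : ZMod 2, c = 0 ∨ c = 1 := by decide
        exact this _
      rcases hz with hz | hz
      · apply ih
        intro j hj
        by_cases hja : j = a
        · rwa [hja]
        · exact hs j (by simp [hja, hj])
      · set d : Fin k → ZMod 2 := fun i => if i = a then 1 else 0 with hd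
        have h1 : P (s + d) := by
          apply ih
          intro j hj
          by_cases hja : j = a
          · subst hja
            simp [hd, hz, z2_add_self]
          · have : s j = 0 := hs j (by simp [hja, hj])
            simp [hd, hja, this]
        have h2 := hstep (s + d) a h1
        have h3 : s + d + (fun i => if i = a then 1 else 0) = s := by
          funext i
          show s i + d i + d i = s i
          rw [add_assoc, z2_add_self, add_zero]
        rwa [h3] at h2
  exact key Finset.univ s (fun j hj => absurd (Finset.mem_univ j) hj)

lemma pairInd_delta (hm : 1 ≤ m) (j : Fin m) :
    pairInd (⟨(j : ℕ), by have := j.isLt; omega⟩ : Fin (2*m)) =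
      fun k => if k = j then 1 else 0 := by
  funext k
  simp [pairInd, Fin.ext_iff, Nat.mod_eq_of_lt j.isLt]

lemma extF_delta (hm : 2 ≤ m) (j : Fin (m-1)) :
    extF (m := m) (fun i => if i = j then 1 else 0) =
      pairInd (⟨(j : ℕ), by have := j.isLt; omega⟩ : Fin (2*m)) +
      pairInd (⟨m-1, by omega⟩ : Fin (2*m)) := by
  have hj : (j : ℕ) < m - 1 := j.isLt
  funext k
  have hk := k.isLt
  show _ = (if ((k : ℕ) = (j : ℕ) % m) then (1 : ZMod 2) else 0) +
      (if ((k : ℕ) = (m-1) % m) then (1 : ZMod 2) else 0)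
  rw [Nat.mod_eq_of_lt (by omega), Nat.mod_eq_of_lt (by omega)]
  by_cases h : (k : ℕ) < m - 1
  · rw [show extF (m := m) (fun i => if i = j then 1 else 0) k = if (⟨k, h⟩ : Fin (m-1)) = j then 1 else 0 from dif_pos h]
    by_cases hkj : (⟨(k : ℕ), h⟩ : Fin (m-1)) = j
    · have hv : (k : ℕ) = (j : ℕ) := congrArg Fin.val hkj
      rw [if_pos hkj, if_pos hv, if_neg (show ¬((k:ℕ) = m-1) from by omega)]
      simp
    · have hv : ¬((k : ℕ) = (j : ℕ)) := fun hc => hkj (Fin.ext hc)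
      rw [if_neg hkj, if_neg hv, if_neg (show ¬((k:ℕ) = m-1) from by omega)]
      simp
  · have hk1 : (k : ℕ) = m - 1 := by omega
    rw [show extF (m := m) (fun i => if i = j then 1 else 0) k = ∑ l, (fun i => if i = j then (1 : ZMod 2) else 0) l from dif_neg h]
    rw [if_neg (show ¬((k:ℕ) = (j:ℕ)) from by omega), if_pos hk1]
    simp

lemma mem_stab_B (hm : 2 ≤ m) (t : Fin m → ZMod 2) :
    Psi m (Multiplicative.ofAdd ((0 : Fin (m-1) → ZMod 2), t)) ∈ XIstabilizer m := by
  induction t using gen_rec with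
  | h0 =>
    have : Psi m (Multiplicative.ofAdd ((0 : Fin (m-1) → ZMod 2), (0 : Fin m → ZMod 2))) = 1 := by
      rw [show ((0 : Fin (m-1) → ZMod 2), (0 : Fin m → ZMod 2)) = (0 : Dgrp m) from rfl]
      exact map_one (Psi m)
    rw [this]; exact one_mem _
  | hstep t j ih =>
    have hsplit : Multiplicative.ofAdd ((0 : Fin (m-1) → ZMod 2), t + fun i => if i = j then (1:ZMod 2) else 0) =
        Multiplicative.ofAdd ((0 : Fin (m-1) → ZMod 2), t) *
        Multiplicative.ofAdd ((0 : Fin (m-1) → ZMod 2), fun i => if i = j then 1 else 0) := by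
      show Multiplicative.ofAdd _ = Multiplicative.ofAdd (((0 : Fin (m-1) → ZMod 2), t) + (0, fun i => if i = j then 1 else 0))
      congr 1
    rw [hsplit, map_mul]
    refine mul_mem ih (Subgroup.subset_closure ?_)
    left
    refine ⟨⟨(j : ℕ), by have := j.isLt; omega⟩, ?_⟩
    rw [← pairInd_delta (show 1 ≤ m by omega) j]
    exact Psi_Z (show 1 ≤ m by omega) _

lemma mem_stab_A (hm : 2 ≤ m) (s : Fin (m-1) → ZMod 2) :
    Psi m (Multiplicative.ofAdd (s, (0 : Fin m → ZMod 2))) ∈ XIstabilizer m := by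
  induction s using gen_rec with
  | h0 =>
    have : Psi m (Multiplicative.ofAdd ((0 : Fin (m-1) → ZMod 2), (0 : Fin m → ZMod 2))) = 1 := by
      rw [show ((0 : Fin (m-1) → ZMod 2), (0 : Fin m → ZMod 2)) = (0 : Dgrp m) from rfl]
      exact map_one (Psi m)
    rw [this]; exact one_mem _
  | hstep s j ih =>
    have hsplit : Multiplicative.ofAdd ((s + fun i => if i = j then (1:ZMod 2) else 0), (0 : Fin m → ZMod 2)) =
        Multiplicative.ofAdd (s, (0 : Fin m → ZMod 2)) *
        Multiplicative.ofAdd ((fun i => if i = j then (1:ZMod 2) else 0), (0 : Fin m → ZMod 2)) := by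
      show Multiplicative.ofAdd _ = Multiplicative.ofAdd ((s, (0: Fin m → ZMod 2)) + (fun i => if i = j then (1:ZMod 2) else 0, 0))
      congr 1
    rw [hsplit, map_mul]
    refine mul_mem ih (Subgroup.subset_closure ?_)
    right
    have hj : (j : ℕ) < m - 1 := j.isLt
    refine ⟨⟨(j : ℕ), by omega⟩, ⟨m-1, by omega⟩, ?_, ?_⟩
    · intro hc
      have h1 : (⟨(j : ℕ), by omega⟩ : Fin (2*m)) ∈
          ({(⟨(j : ℕ), by omega⟩ : Fin (2*m)), tau m (⟨(j : ℕ), by omega⟩ : Fin (2*m))} :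
            Finset (Fin (2*m))) := Finset.mem_insert_self _ _
      rw [hc] at h1
      have := (mem_pair_iff (show 1 ≤ m by omega) _ _).1 h1
      simp only at this
      rw [Nat.mod_eq_of_lt (by omega), Nat.mod_eq_of_lt (by omega)] at this
      omega
    · refine Psi_X (show 1 ≤ m by omega) ?_ (extF_delta hm j)
      simp only
      rw [Nat.mod_eq_of_lt (by omega), Nat.mod_eq_of_lt (by omega)]
      omega

lemma stab_eq_range (hm : 2 ≤ m) : XIstabilizer m = (Psi m).range := by
  apply le_antisymm
  · rw [XIstabilizer]
    rw [Subgroup.closure_le]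
    rintro u (⟨i, hu⟩ | ⟨i, j, hne, hu⟩)
    · exact ⟨Multiplicative.ofAdd (0, pairInd i), Units.ext ((Psi_Z (by omega) i).trans hu.symm)⟩
    · have hij : i.val % m ≠ j.val % m := fun hc => hne (pair_eq_of_mod (by omega) hc)
      have hsum : ∑ k, (pairInd i + pairInd j) k = 0 := by
        simp only [Pi.add_apply, Finset.sum_add_distrib, sum_pairInd (show 1 ≤ m by omega)]
        exact z2_add_self 1
      obtain ⟨s, hs⟩ := extF_surj (by omega) _ hsum
      exact ⟨Multiplicative.ofAdd (s, 0), Units.ext ((Psi_X (by omega) hij hs).trans hu.symm)⟩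
  · rintro u ⟨p, rfl⟩
    have hp : p = Multiplicative.ofAdd (p.toAdd.1, (0 : Fin m → ZMod 2)) *
        Multiplicative.ofAdd ((0 : Fin (m-1) → ZMod 2), p.toAdd.2) := by
      show p = Multiplicative.ofAdd ((p.toAdd.1, (0 : Fin m → ZMod 2)) + (0, p.toAdd.2))
      have : ((p.toAdd.1, (0 : Fin m → ZMod 2)) + ((0 : Fin (m-1) → ZMod 2), p.toAdd.2)) = p.toAdd := by
        simp
      rw [this]
      rfl
    rw [hp, map_mul]
    exact mul_mem (mem_stab_A hm _) (mem_stab_B hm _)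

end XIaux

/-- The stabilizer group of `Ξ(2m)` is an elementary abelian 2-group of order
`2^{2m−1}`. -/
theorem XI_stabilizer_group_structure (m : ℕ) (hm : 2 ≤ m) :
    Nat.card (XIstabilizer m) = 2 ^ (2*m - 1) ∧
    (∀ g ∈ XIstabilizer m, g * g = 1) ∧
    (∀ g ∈ XIstabilizer m, ∀ h ∈ XIstabilizer m, g * h = h * g) := by
  have heq := XIaux.stab_eq_range hm
  have hsq : ∀ p : Multiplicative (XIaux.Dgrp m), p * p = 1 := by
    intro p
    have hadd : p.toAdd + p.toAdd = 0 := by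
      ext i <;> exact XIaux.z2_add_self _
    calc p * p = Multiplicative.ofAdd (p.toAdd + p.toAdd) := rfl
      _ = Multiplicative.ofAdd 0 := by rw [hadd]
      _ = 1 := rfl
  refine ⟨?_, ?_, ?_⟩
  · rw [heq]
    have h1 : Nat.card ((XIaux.Psi m).range) = Nat.card (Multiplicative (XIaux.Dgrp m)) :=
      Nat.card_congr (MonoidHom.ofInjective (XIaux.Psi_inj (show 1 ≤ m by omega))).toEquiv.symm
    rw [h1]
    have h2 : Nat.card (Multiplicative (XIaux.Dgrp m)) = 2^(m-1) * 2^m := by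
      simp [Nat.card_eq_fintype_card]
    rw [h2, ← pow_add, show m - 1 + m = 2*m - 1 by omega]
  · intro g hg
    rw [heq] at hg
    obtain ⟨p, rfl⟩ := hg
    rw [← map_mul, hsq, map_one]
  · intro g hg h hh
    rw [heq] at hg hh
    obtain ⟨p, rfl⟩ := hg
    obtain ⟨q, rfl⟩ := hh
    rw [← map_mul, ← map_mul, mul_comm]
end
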